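/- Let n ≥ 2 be an integer. Let F be a homeomorphism of ℝ² satisfying F(x + P) = F(x) + P for all x ∈ ℝ² and P ∈ ℤ², and let H be a homeomorphism of ℝ² for which there is a matrix A ∈ GL(2, ℤ) with H(x + P) = H(x) + A·P for all x ∈ ℝ² and P ∈ ℤ². Assume there is an integer vector P₀ ∈ ℤ² such that H ∘ F ∘ H⁻¹(x) = Fⁿ(x) + P₀ for all x ∈ ℝ². Then the rotation set ρ(F) is a single point with rational coordinates: there exists v ∈ ℚ² with ρ(F) = {v}. -/

import Mathlib

open Filter Topology

/-- The rotation set of a map `G : ℝ² → ℝ²` (commuting with integer translations):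
the set of vectors `v` for which there are points `xᵢ` and positive integers `mᵢ → ∞`
with `(G^{mᵢ}(xᵢ) − xᵢ)/mᵢ → v`. -/
def rotSet (G : ℝ × ℝ → ℝ × ℝ) : Set (ℝ × ℝ) :=
  {v | ∃ (x : ℕ → ℝ × ℝ) (m : ℕ → ℕ), (∀ i, 0 < m i) ∧ Tendsto m atTop atTop ∧
    Tendsto (fun i => ((m i : ℝ))⁻¹ • (G^[m i] (x i) - x i)) atTop (nhds v)}

/-- The linear action of an integer 2×2 matrix on `ℝ²`. -/
def matAct (A : Matrix (Fin 2) (Fin 2) ℤ) (v : ℝ × ℝ) : ℝ × ℝ :=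
  ((A 0 0 : ℝ) * v.1 + (A 0 1 : ℝ) * v.2, (A 1 0 : ℝ) * v.1 + (A 1 1 : ℝ) * v.2)

lemma matAct_add (M : Matrix (Fin 2) (Fin 2) ℤ) (u v : ℝ × ℝ) :
    matAct M (u + v) = matAct M u + matAct M v := by
  simp only [matAct, Prod.fst_add, Prod.snd_add, Prod.mk_add_mk, Prod.mk.injEq]
  constructor <;> ring

lemma matAct_sub (M : Matrix (Fin 2) (Fin 2) ℤ) (u v : ℝ × ℝ) :
    matAct M (u - v) = matAct M u - matAct M v := by
  simp only [matAct, Prod.fst_sub, Prod.snd_sub, Prod.mk_sub_mk, Prod.mk.injEq]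
  constructor <;> ring

lemma matAct_smul (M : Matrix (Fin 2) (Fin 2) ℤ) (r : ℝ) (v : ℝ × ℝ) :
    matAct M (r • v) = r • matAct M v := by
  simp only [matAct, Prod.smul_fst, Prod.smul_snd, Prod.smul_mk, smul_eq_mul, Prod.mk.injEq]
  constructor <;> ring

lemma matAct_cont (M : Matrix (Fin 2) (Fin 2) ℤ) : Continuous (matAct M) := by
  unfold matAct; fun_prop

lemma periodic_bounded (φ : ℝ × ℝ → ℝ × ℝ) (hcont : Continuous φ)
    (hper : ∀ (x : ℝ × ℝ) (p q : ℤ), φ (x + ((p:ℝ),(q:ℝ))) = φ x) :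
    ∃ C : ℝ, 0 ≤ C ∧ ∀ x, ‖φ x‖ ≤ C := by
  obtain ⟨C, hC⟩ := (isCompact_Icc (a := ((0:ℝ),(0:ℝ))) (b := (1,1))).exists_bound_of_continuousOn
    hcont.continuousOn
  refine ⟨max C 0, le_max_right _ _, fun x => ?_⟩
  have key : φ x = φ (Int.fract x.1, Int.fract x.2) := by
    have h := hper (Int.fract x.1, Int.fract x.2) ⌊x.1⌋ ⌊x.2⌋
    have h2 : (Int.fract x.1, Int.fract x.2) + ((⌊x.1⌋ : ℝ), (⌊x.2⌋ : ℝ)) = x := by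
      rw [Prod.ext_iff]
      refine ⟨?_, ?_⟩ <;>
        simp only [Prod.fst_add, Prod.snd_add] <;>
        exact Int.fract_add_floor _
    rw [h2] at h
    exact h
  rw [key]
  refine le_trans (hC _ ?_) (le_max_left _ _)
  constructor
  · exact ⟨Int.fract_nonneg _, Int.fract_nonneg _⟩
  · exact ⟨(Int.fract_lt_one _).le, (Int.fract_lt_one _).le⟩


lemma sup_contract {K : Set (ℝ × ℝ)} (hne : K.Nonempty) {f : ℝ × ℝ → ℝ} {ρ C : ℝ}
    (hC : ∀ v ∈ K, |f v| ≤ C) (hρ0 : 0 ≤ ρ) (hρ1 : ρ ≠ 1)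
    {L : ℝ × ℝ → ℝ × ℝ} (hLK : L '' K = K)
    (hf : ∀ v ∈ K, |f (L v)| = ρ * |f v|) : ∀ v ∈ K, f v = 0 := by
  set s := sSup ((fun v => |f v|) '' K) with hs
  have hbdd : BddAbove ((fun v => |f v|) '' K) := ⟨C, by rintro y ⟨v, hv, rfl⟩; exact hC v hv⟩
  have hne' : ((fun v => |f v|) '' K).Nonempty := hne.image _
  have hle : ∀ v ∈ K, |f v| ≤ s := fun v hv => le_csSup hbdd ⟨v, hv, rfl⟩
  have hs0 : 0 ≤ s := by
    obtain ⟨v, hv⟩ := hne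
    exact le_trans (abs_nonneg _) (hle v hv)
  have hszero : s ≤ 0 := by
    rcases lt_or_gt_of_ne hρ1 with hlt | hgt
    · have h1 : s ≤ ρ * s := by
        refine csSup_le hne' ?_
        rintro y ⟨v, hv, rfl⟩
        have hv' : v ∈ L '' K := hLK.symm ▸ hv
        obtain ⟨w, hw, rfl⟩ := hv'
        show |f (L w)| ≤ ρ * s
        rw [hf w hw]
        exact mul_le_mul_of_nonneg_left (hle w hw) hρ0
      nlinarith
    · have h1 : s ≤ ρ⁻¹ * s := by
        refine csSup_le hne' ?_
        rintro y ⟨v, hv, rfl⟩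
        have h2 : ρ * |f v| ≤ s := by
          rw [← hf v hv]
          exact hle _ (hLK ▸ Set.mem_image_of_mem L hv)
        show |f v| ≤ ρ⁻¹ * s
        rw [inv_mul_eq_div, le_div_iff₀ (by linarith)]
        linarith [h2]
      have hρpos : (0:ℝ) < ρ := by linarith
      have : ρ * s ≤ s := by
        have := mul_le_mul_of_nonneg_left h1 hρpos.le
        rwa [mul_inv_cancel_left₀ (ne_of_gt hρpos)] at this
      nlinarith
  intro v hv
  have := hle v hv
  have : |f v| ≤ 0 := le_trans this hszero
  exact abs_eq_zero.mp (le_antisymm this (abs_nonneg _))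


lemma invariant_zero (a b c d : ℝ)
    (hroots : ∀ μ : ℝ, μ * μ - (a + d) * μ + (a * d - b * c) = 0 → |μ| ≠ 1)
    (hdet : |a * d - b * c| < 1)
    {K : Set (ℝ × ℝ)} (hne : K.Nonempty)
    {R : ℝ} (hR0 : 0 ≤ R) (hR : ∀ v ∈ K, ‖v‖ ≤ R)
    (hLK : (fun v : ℝ × ℝ => (a * v.1 + b * v.2, c * v.1 + d * v.2)) '' K = K) :
    ∀ v ∈ K, v = 0 := by
  set L : ℝ × ℝ → ℝ × ℝ := fun v => (a * v.1 + b * v.2, c * v.1 + d * v.2) with hL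
  have hv1 : ∀ v ∈ K, |v.1| ≤ R := fun v hv => le_trans (norm_fst_le v) (hR v hv)
  have hv2 : ∀ v ∈ K, |v.2| ≤ R := fun v hv => le_trans (norm_snd_le v) (hR v hv)
  by_cases hΔ : (a + d) ^ 2 - 4 * (a * d - b * c) < 0
  · -- complex eigenvalues: invariant definite quadratic form
    set f : ℝ × ℝ → ℝ := fun v => c * v.1 ^ 2 + (d - a) * v.1 * v.2 - b * v.2 ^ 2 with hfdef
    have hbound : ∀ v ∈ K, |f v| ≤ (|c| + |d - a| + |b|) * R ^ 2 := by
      intro v hv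
      have h1 := hv1 v hv; have h2 := hv2 v hv
      have e1 : |c * v.1 ^ 2| ≤ |c| * R ^ 2 := by
        rw [abs_mul, abs_pow]
        exact mul_le_mul_of_nonneg_left (pow_le_pow_left₀ (abs_nonneg _) h1 2) (abs_nonneg c)
      have e2 : |(d - a) * v.1 * v.2| ≤ |d - a| * R ^ 2 := by
        rw [abs_mul, abs_mul]
        calc |d - a| * |v.1| * |v.2| ≤ |d - a| * R * R := by
              apply mul_le_mul (mul_le_mul_of_nonneg_left h1 (abs_nonneg _)) h2 (abs_nonneg _)
              positivity
          _ = |d - a| * R ^ 2 := by ring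
      have e3 : |b * v.2 ^ 2| ≤ |b| * R ^ 2 := by
        rw [abs_mul, abs_pow]
        exact mul_le_mul_of_nonneg_left (pow_le_pow_left₀ (abs_nonneg _) h2 2) (abs_nonneg b)
      calc |f v| ≤ |c * v.1 ^ 2 + (d - a) * v.1 * v.2| + |b * v.2 ^ 2| := by
            rw [hfdef]; exact abs_sub _ _
        _ ≤ |c * v.1 ^ 2| + |(d - a) * v.1 * v.2| + |b * v.2 ^ 2| := by
            have := abs_add_le (c * v.1 ^ 2) ((d - a) * v.1 * v.2); linarith
        _ ≤ (|c| + |d - a| + |b|) * R ^ 2 := by nlinarith [e1, e2, e3]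
    have hmul : ∀ v : ℝ × ℝ, f (L v) = (a * d - b * c) * f v := by
      intro v
      show c * (a * v.1 + b * v.2) ^ 2 + (d - a) * (a * v.1 + b * v.2) * (c * v.1 + d * v.2)
          - b * (c * v.1 + d * v.2) ^ 2 = (a * d - b * c) * (c * v.1 ^ 2 + (d - a) * v.1 * v.2 - b * v.2 ^ 2)
      ring
    have hzero : ∀ v ∈ K, f v = 0 := by
      refine sup_contract hne hbound (abs_nonneg _) (ne_of_lt hdet) hLK ?_
      intro v _
      rw [hmul v, abs_mul]
    intro v hv
    have hfv := hzero v hv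
    have hcne : c ≠ 0 := by
      intro hc
      rw [hc] at hΔ
      nlinarith [sq_nonneg (a - d)]
    have hp : 0 < -((d - a) ^ 2) - 4 * b * c := by nlinarith [hΔ]
    have key : (2 * c * v.1 + (d - a) * v.2) ^ 2 + (-((d - a) ^ 2) - 4 * b * c) * v.2 ^ 2
        = 4 * c * f v := by rw [hfdef]; ring
    rw [hfv, mul_zero] at key
    have h2sq : v.2 ^ 2 = 0 := by nlinarith [sq_nonneg (2 * c * v.1 + (d - a) * v.2), sq_nonneg v.2]
    have h2 : v.2 = 0 := by
      have := sq_eq_zero_iff.mp h2sq; exact this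
    have h1 : v.1 = 0 := by
      rw [h2] at key
      have : (2 * c * v.1) ^ 2 = 0 := by nlinarith [key]
      have := sq_eq_zero_iff.mp this
      rcases mul_eq_zero.mp this with h | h
      · exfalso; apply hcne; linarith
      · exact h
    exact Prod.ext h1 h2
  · -- real eigenvalues
    push_neg at hΔ
    set s := Real.sqrt ((a + d) ^ 2 - 4 * (a * d - b * c)) with hsdef
    have hs2 : s ^ 2 = (a + d) ^ 2 - 4 * (a * d - b * c) := Real.sq_sqrt hΔ
    set μ := (a + d + s) / 2 with hμdef
    have hμ : μ * μ - (a + d) * μ + (a * d - b * c) = 0 := by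
      rw [hμdef]; linear_combination hs2 / 4
    by_cases hscalar : b = 0 ∧ c = 0 ∧ a = d
    · obtain ⟨hb, hc, had⟩ := hscalar
      have ha : |a| ≠ 1 := by
        apply hroots a
        rw [hb, hc, ← had]; ring
      have z1 : ∀ v ∈ K, v.1 = 0 := by
        refine sup_contract hne (f := fun v => v.1) (C := R) hv1 (abs_nonneg a) ha hLK ?_
        intro v _
        show |a * v.1 + b * v.2| = |a| * |v.1|
        rw [hb, ← abs_mul]; ring_nf
      have z2 : ∀ v ∈ K, v.2 = 0 := by
        refine sup_contract hne (f := fun v => v.2) (C := R) hv2 (abs_nonneg a) ha hLK ?_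
        intro v _
        show |c * v.1 + d * v.2| = |a| * |v.2|
        rw [hc, ← had, ← abs_mul]; ring_nf
      exact fun v hv => Prod.ext (z1 v hv) (z2 v hv)
    · -- non-scalar: find left eigen-functional for μ
      obtain ⟨r₁, r₂, hden, hEig⟩ : ∃ r₁ r₂ : ℝ, 0 < r₁ ^ 2 + r₂ ^ 2 ∧
          ∀ v : ℝ × ℝ, r₁ * (a * v.1 + b * v.2) + r₂ * (c * v.1 + d * v.2)
            = μ * (r₁ * v.1 + r₂ * v.2) := by
        by_cases hc : c ≠ 0 ∨ μ - a ≠ 0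
        · refine ⟨c, μ - a, ?_, ?_⟩
          · rcases hc with h | h
            · positivity
            · positivity
          · intro v; linear_combination (-v.2) * hμ
        · push_neg at hc
          obtain ⟨hc0, hμa⟩ := hc
          have hμa' : μ = a := by linarith [sub_eq_zero.mp hμa]
          by_cases hb : μ - d ≠ 0 ∨ b ≠ 0
          · refine ⟨μ - d, b, ?_, ?_⟩
            · rcases hb with h | h
              · positivity
              · positivity
            · intro v; linear_combination (-v.1) * hμ
          · push_neg at hb
            obtain ⟨hμd, hb0⟩ := hb
            exfalso
            exact hscalar ⟨hb0, hc0, by rw [← hμa']; linarith [sub_eq_zero.mp hμd]⟩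
      have hμ1 : |μ| ≠ 1 := hroots μ hμ
      -- Step A: K is inside the kernel line of the functional
      have hK1 : ∀ v ∈ K, r₁ * v.1 + r₂ * v.2 = 0 := by
        refine sup_contract hne (f := fun v => r₁ * v.1 + r₂ * v.2)
          (C := (|r₁| + |r₂|) * R) ?_ (abs_nonneg μ) hμ1 hLK ?_
        · intro v hv
          calc |r₁ * v.1 + r₂ * v.2| ≤ |r₁ * v.1| + |r₂ * v.2| := abs_add_le _ _
            _ ≤ |r₁| * R + |r₂| * R := by
                rw [abs_mul, abs_mul]
                exact add_le_add (mul_le_mul_of_nonneg_left (hv1 v hv) (abs_nonneg _))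
                  (mul_le_mul_of_nonneg_left (hv2 v hv) (abs_nonneg _))
            _ = (|r₁| + |r₂|) * R := by ring
        · intro v _
          show |r₁ * (a * v.1 + b * v.2) + r₂ * (c * v.1 + d * v.2)| = |μ| * |r₁ * v.1 + r₂ * v.2|
          rw [hEig v, abs_mul]
      -- Step B: contraction along the kernel line
      set den := r₁ ^ 2 + r₂ ^ 2 with hdendef
      have hdne : den ≠ 0 := ne_of_gt hden
      set g : ℝ × ℝ → ℝ := fun v => (-r₂ * v.1 + r₁ * v.2) / den with hgdef
      have hrep : ∀ v : ℝ × ℝ, r₁ * v.1 + r₂ * v.2 = 0 → v = (g v * -r₂, g v * r₁) := by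
        intro v hv
        have h1 : v.1 = g v * -r₂ := by
          rw [hgdef]; field_simp [hdendef]; linear_combination r₁ * hv
        have h2 : v.2 = g v * r₁ := by
          rw [hgdef]; field_simp [hdendef]; linear_combination r₂ * hv
        exact Prod.ext h1 h2
      -- the kernel direction is an eigenvector, eigenvalue κ
      have hLe : r₁ * (L (-r₂, r₁)).1 + r₂ * (L (-r₂, r₁)).2 = 0 := by
        have := hEig (-r₂, r₁)
        show r₁ * (a * (-r₂) + b * r₁) + r₂ * (c * (-r₂) + d * r₁) = 0
        calc r₁ * (a * (-r₂) + b * r₁) + r₂ * (c * (-r₂) + d * r₁)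
            = μ * (r₁ * (-r₂) + r₂ * r₁) := this
          _ = 0 := by ring
      set κ := g (L (-r₂, r₁)) with hκdef
      have hLe_rep : L (-r₂, r₁) = (κ * -r₂, κ * r₁) := hrep _ hLe
      have E1 : a * (-r₂) + b * r₁ = κ * -r₂ := congrArg Prod.fst hLe_rep
      have E2 : c * (-r₂) + d * r₁ = κ * r₁ := congrArg Prod.snd hLe_rep
      have hκpoly : κ * κ - (a + d) * κ + (a * d - b * c) = 0 := by
        have h3 : (κ * κ - (a + d) * κ + (a * d - b * c)) * r₂ = 0 := by
          linear_combination (κ - d) * E1 + b * E2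
        have h4 : (κ * κ - (a + d) * κ + (a * d - b * c)) * r₁ = 0 := by
          linear_combination (-c) * E1 + (a - κ) * E2
        have h5 : (κ * κ - (a + d) * κ + (a * d - b * c)) * den = 0 := by
          rw [hdendef]; linear_combination r₁ * h4 + r₂ * h3
        exact (mul_eq_zero.mp h5).resolve_right hdne
      have hκ1 : |κ| ≠ 1 := hroots κ hκpoly
      have hgK : ∀ v ∈ K, g v = 0 := by
        refine sup_contract hne (f := g) (C := (|r₂| + |r₁|) / den * R) ?_ (abs_nonneg κ) hκ1 hLK ?_
        · intro v hv
          rw [hgdef]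
          show |(-r₂ * v.1 + r₁ * v.2) / den| ≤ (|r₂| + |r₁|) / den * R
          rw [abs_div, abs_of_pos hden, div_mul_eq_mul_div, div_le_div_iff₀ hden hden]
          have : |(-r₂ * v.1 + r₁ * v.2)| ≤ |r₂| * R + |r₁| * R := by
            calc |(-r₂ * v.1 + r₁ * v.2)| ≤ |(-r₂) * v.1| + |r₁ * v.2| := abs_add_le _ _
              _ ≤ |r₂| * R + |r₁| * R := by
                  rw [abs_mul, abs_mul, abs_neg]
                  exact add_le_add (mul_le_mul_of_nonneg_left (hv1 v hv) (abs_nonneg _))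
                    (mul_le_mul_of_nonneg_left (hv2 v hv) (abs_nonneg _))
          nlinarith [this, hden]
        · intro v hv
          have hrepv := hrep v (hK1 v hv)
          have hgL : g (L v) = κ * g v := by
            have hLv : L v = (g v * (κ * -r₂), g v * (κ * r₁)) := by
              rw [hL]
              rw [Prod.ext_iff]
              constructor
              · show a * v.1 + b * v.2 = g v * (κ * -r₂)
                have h1 : v.1 = g v * -r₂ := congrArg Prod.fst hrepv
                have h2 : v.2 = g v * r₁ := congrArg Prod.snd hrepv
                rw [h1, h2]; linear_combination g v * E1
              · show c * v.1 + d * v.2 = g v * (κ * r₁)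
                have h1 : v.1 = g v * -r₂ := congrArg Prod.fst hrepv
                have h2 : v.2 = g v * r₁ := congrArg Prod.snd hrepv
                rw [h1, h2]; linear_combination g v * E2
            rw [hLv, hgdef]
            show (-r₂ * (g v * (κ * -r₂)) + r₁ * (g v * (κ * r₁))) / den = κ * ((-r₂ * v.1 + r₁ * v.2) / den)
            have h1 : v.1 = g v * -r₂ := congrArg Prod.fst hrepv
            have h2 : v.2 = g v * r₁ := congrArg Prod.snd hrepv
            rw [h1, h2]
            field_simp
          rw [hgL, abs_mul]
      intro v hv
      have hrepv := hrep v (hK1 v hv)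
      rw [hgK v hv] at hrepv
      exact hrepv.trans (Prod.ext (by simp) (by simp))


section Transfers

variable (n : ℕ) (F H : (ℝ × ℝ) ≃ₜ (ℝ × ℝ)) (A B : Matrix (Fin 2) (Fin 2) ℤ) (P₀ : ℤ × ℤ)

-- iterates commute with integer translations
lemma iter_translate
    (hF : ∀ (x : ℝ × ℝ) (p q : ℤ), F (x + ((p : ℝ), (q : ℝ))) = F x + ((p : ℝ), (q : ℝ)))
    (k : ℕ) (x : ℝ × ℝ) (p q : ℤ) :
    (⇑F)^[k] (x + ((p : ℝ), (q : ℝ))) = (⇑F)^[k] x + ((p : ℝ), (q : ℝ)) := by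
  induction k with
  | zero => simp
  | succ k ih =>
      rw [Function.iterate_succ_apply', Function.iterate_succ_apply', ih, hF]

lemma iter_disp_bound {C : ℝ}
    (hC : ∀ x : ℝ × ℝ, ‖F x - x‖ ≤ C) (k : ℕ) (x : ℝ × ℝ) :
    ‖(⇑F)^[k] x - x‖ ≤ k * C := by
  induction k with
  | zero => simp
  | succ k ih =>
      have h1 : (⇑F)^[k+1] x - x = (F ((⇑F)^[k] x) - (⇑F)^[k] x) + ((⇑F)^[k] x - x) := by
        rw [Function.iterate_succ_apply']; abel
      rw [h1]
      calc ‖(F ((⇑F)^[k] x) - (⇑F)^[k] x) + ((⇑F)^[k] x - x)‖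
          ≤ ‖F ((⇑F)^[k] x) - (⇑F)^[k] x‖ + ‖(⇑F)^[k] x - x‖ := norm_add_le _ _
        _ ≤ C + k * C := add_le_add (hC _) ih
        _ = (k + 1 : ℕ) * C := by push_cast; ring

lemma conj_iter
    (hF : ∀ (x : ℝ × ℝ) (p q : ℤ), F (x + ((p : ℝ), (q : ℝ))) = F x + ((p : ℝ), (q : ℝ)))
    (hbase : ∀ y : ℝ × ℝ, H (F y) = (⇑F)^[n] (H y) + ((P₀.1 : ℝ), (P₀.2 : ℝ)))
    (m : ℕ) (y : ℝ × ℝ) :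
    H ((⇑F)^[m] y) = (⇑F)^[n * m] (H y) + (((m * P₀.1 : ℤ) : ℝ), ((m * P₀.2 : ℤ) : ℝ)) := by
  induction m with
  | zero => simp
  | succ m ih =>
      rw [Function.iterate_succ_apply', hbase, ih]
      rw [iter_translate F hF]
      have hiter : (⇑F)^[n] ((⇑F)^[n * m] (H y)) = (⇑F)^[n * (m + 1)] (H y) := by
        rw [← Function.iterate_add_apply]
        congr 1
        ring
      rw [hiter]
      rw [add_assoc]
      congr 1
      simp only [Prod.mk_add_mk, Prod.mk.injEq]
      constructor <;> push_cast <;> ring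

end Transfers

lemma rot_transfer_a (n : ℕ) (hn : 2 ≤ n) (F H : (ℝ × ℝ) ≃ₜ (ℝ × ℝ))
    (A : Matrix (Fin 2) (Fin 2) ℤ) (P₀ : ℤ × ℤ)
    (hconjIter : ∀ (m : ℕ) (y : ℝ × ℝ), H ((⇑F)^[m] y)
      = (⇑F)^[n * m] (H y) + (((m * P₀.1 : ℤ) : ℝ), ((m * P₀.2 : ℤ) : ℝ)))
    {C_H : ℝ} (hCH : ∀ x : ℝ × ℝ, ‖H x - matAct A x‖ ≤ C_H)
    {v : ℝ × ℝ} (hv : v ∈ rotSet ⇑F) :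
    ((n : ℝ))⁻¹ • (matAct A v - ((P₀.1 : ℝ), (P₀.2 : ℝ))) ∈ rotSet ⇑F := by
  obtain ⟨x, m, hm, htop, hlim⟩ := hv
  set cR : ℝ × ℝ := ((P₀.1 : ℝ), (P₀.2 : ℝ)) with hcR
  have hivec : ∀ k : ℕ, ((((k : ℤ) * P₀.1 : ℤ) : ℝ), (((k : ℤ) * P₀.2 : ℤ) : ℝ)) = (k : ℝ) • cR := by
    intro k
    simp only [hcR, Prod.smul_mk, smul_eq_mul, Prod.mk.injEq]
    constructor <;> push_cast <;> ring
  refine ⟨fun i => H (x i), fun i => n * m i, fun i => Nat.mul_pos (by omega) (hm i),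
    tendsto_atTop_mono (fun i => Nat.le_mul_of_pos_left (m i) (by omega)) htop, ?_⟩
  have hnum : ∀ i, (⇑F)^[n * m i] (H (x i)) - H (x i)
      = matAct A ((⇑F)^[m i] (x i) - x i)
        + ((H ((⇑F)^[m i] (x i)) - matAct A ((⇑F)^[m i] (x i))) - (H (x i) - matAct A (x i)))
        - (m i : ℝ) • cR := by
    intro i
    have h := hconjIter (m i) (x i)
    have h2 : (⇑F)^[n * m i] (H (x i)) = H ((⇑F)^[m i] (x i)) - (m i : ℝ) • cR := by
      rw [h, hivec (m i)]
      abel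
    rw [h2, matAct_sub]
    abel
  have hterm : ∀ i, ((n * m i : ℕ) : ℝ)⁻¹ • ((⇑F)^[n * m i] (H (x i)) - H (x i))
      = (n : ℝ)⁻¹ • matAct A (((m i : ℕ) : ℝ)⁻¹ • ((⇑F)^[m i] (x i) - x i))
        + ((n : ℝ)⁻¹ * ((m i : ℕ) : ℝ)⁻¹) •
          ((H ((⇑F)^[m i] (x i)) - matAct A ((⇑F)^[m i] (x i))) - (H (x i) - matAct A (x i)))
        - (n : ℝ)⁻¹ • cR := by
    intro i
    have hmne : ((m i : ℕ) : ℝ) ≠ 0 := Nat.cast_ne_zero.mpr (hm i).ne'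
    have s1 : ((n * m i : ℕ) : ℝ)⁻¹ = (n : ℝ)⁻¹ * ((m i : ℕ) : ℝ)⁻¹ := by
      push_cast; rw [mul_inv]
    rw [hnum i, s1, smul_sub, smul_add]
    congr 1
    · congr 1
      rw [matAct_smul, smul_smul]
    · rw [smul_smul]
      congr 1
      field_simp
  have hminv : Tendsto (fun i => ((m i : ℕ) : ℝ)⁻¹) atTop (nhds 0) :=
    tendsto_inv_atTop_zero.comp (tendsto_natCast_atTop_atTop.comp htop)
  have t1 : Tendsto (fun i => (n : ℝ)⁻¹ • matAct A (((m i : ℕ) : ℝ)⁻¹ • ((⇑F)^[m i] (x i) - x i)))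
      atTop (nhds ((n : ℝ)⁻¹ • matAct A v)) :=
    (((matAct_cont A).tendsto v).comp hlim).const_smul _
  have t2 : Tendsto (fun i => ((n : ℝ)⁻¹ * ((m i : ℕ) : ℝ)⁻¹) •
      ((H ((⇑F)^[m i] (x i)) - matAct A ((⇑F)^[m i] (x i))) - (H (x i) - matAct A (x i))))
      atTop (nhds 0) := by
    have t2' : Tendsto (fun i => (n : ℝ)⁻¹ * ((m i : ℕ) : ℝ)⁻¹ * (2 * C_H)) atTop (nhds 0) := by
      have := (hminv.const_mul ((n : ℝ)⁻¹)).mul_const (2 * C_H)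
      simpa using this
    refine squeeze_zero_norm (fun i => ?_) t2'
    have hE : ‖(H ((⇑F)^[m i] (x i)) - matAct A ((⇑F)^[m i] (x i))) - (H (x i) - matAct A (x i))‖
        ≤ 2 * C_H := by
      calc ‖_ - _‖ ≤ ‖H ((⇑F)^[m i] (x i)) - matAct A ((⇑F)^[m i] (x i))‖
            + ‖H (x i) - matAct A (x i)‖ := norm_sub_le _ _
        _ ≤ C_H + C_H := add_le_add (hCH _) (hCH _)
        _ = 2 * C_H := by ring
    rw [norm_smul, Real.norm_eq_abs, abs_of_nonneg (by positivity)]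
    exact mul_le_mul_of_nonneg_left hE (by positivity)
  have total := (t1.add t2).sub (tendsto_const_nhds (x := (n : ℝ)⁻¹ • cR))
  rw [add_zero] at total
  rw [show (n : ℝ)⁻¹ • (matAct A v - cR) = (n : ℝ)⁻¹ • matAct A v - (n : ℝ)⁻¹ • cR from
    smul_sub _ _ _]
  exact Tendsto.congr (fun i => (hterm i).symm) total

set_option maxHeartbeats 1000000 in
lemma rot_transfer_b (n : ℕ) (hn : 2 ≤ n) (F H : (ℝ × ℝ) ≃ₜ (ℝ × ℝ))
    (B : Matrix (Fin 2) (Fin 2) ℤ) (P₀ : ℤ × ℤ)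
    {C_F : ℝ} (hCF0 : 0 ≤ C_F) (hCF : ∀ x : ℝ × ℝ, ‖F x - x‖ ≤ C_F)
    (hconjIter : ∀ (m : ℕ) (y : ℝ × ℝ), H ((⇑F)^[m] y)
      = (⇑F)^[n * m] (H y) + (((m * P₀.1 : ℤ) : ℝ), ((m * P₀.2 : ℤ) : ℝ)))
    {C_S : ℝ} (hCS : ∀ x : ℝ × ℝ, ‖H.symm x - matAct B x‖ ≤ C_S)
    {v : ℝ × ℝ} (hv : v ∈ rotSet ⇑F) :
    matAct B ((n : ℝ) • v + ((P₀.1 : ℝ), (P₀.2 : ℝ))) ∈ rotSet ⇑F := by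
  obtain ⟨y, k, hk, htop, hlim⟩ := hv
  set cR : ℝ × ℝ := ((P₀.1 : ℝ), (P₀.2 : ℝ)) with hcR
  have hivec : ∀ j : ℕ, ((((j : ℤ) * P₀.1 : ℤ) : ℝ), (((j : ℤ) * P₀.2 : ℤ) : ℝ)) = (j : ℝ) • cR := by
    intro j
    simp only [hcR, Prod.smul_mk, smul_eq_mul, Prod.mk.injEq]
    constructor <;> push_cast <;> ring
  have hnpos : 0 < n := by omega
  have hn0R : (n : ℝ) ≠ 0 := Nat.cast_ne_zero.mpr hnpos.ne'
  obtain ⟨q, hqe⟩ : ∃ q : ℕ → ℕ, ∀ i, q i = k i / n + 1 := ⟨_, fun _ => rfl⟩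
  have hq : ∀ i, 0 < q i := fun i => (hqe i) ▸ Nat.succ_pos _
  have hmuls : ∀ i, n * q i = n * (k i / n) + n := by
    intro i; rw [hqe i]; exact Nat.mul_succ n (k i / n)
  have hkq : ∀ i, k i < n * q i := by
    intro i
    have h1 := Nat.div_add_mod (k i) n
    have h2 := Nat.mod_lt (k i) hnpos
    have h3 := hmuls i
    omega
  have hqk : ∀ i, n * q i ≤ k i + n := by
    intro i
    have h1 := Nat.div_add_mod (k i) n
    have h3 := hmuls i
    omega
  have htopq : Tendsto q atTop atTop := by
    rw [tendsto_atTop]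
    intro b
    filter_upwards [tendsto_atTop.mp htop (n * b)] with i hi
    have hb : b ≤ k i / n := (Nat.le_div_iff_mul_le hnpos).mpr (by rw [mul_comm]; exact hi)
    have := hqe i
    omega
  have hqne : ∀ i, ((q i : ℕ) : ℝ) ≠ 0 := fun i => Nat.cast_ne_zero.mpr (hq i).ne'
  have hnqpos : ∀ i, (0:ℝ) < ((n * q i : ℕ) : ℝ) := by
    intro i; exact_mod_cast Nat.mul_pos hnpos (hq i)
  have hkne : ∀ i, ((k i : ℕ) : ℝ) ≠ 0 := fun i => Nat.cast_ne_zero.mpr (hk i).ne'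
  -- limit along times n * q i
  have hlim2 : Tendsto (fun i => (((n * q i : ℕ)) : ℝ)⁻¹ • ((⇑F)^[n * q i] (y i) - y i))
      atTop (nhds v) := by
    have hdiff : ∀ i, ‖((⇑F)^[n * q i] (y i) - y i) - ((⇑F)^[k i] (y i) - y i)‖ ≤ n * C_F := by
      intro i
      have hj' : (n * q i - k i) + k i = n * q i := Nat.sub_add_cancel (le_of_lt (hkq i))
      have heq : ((⇑F)^[n * q i] (y i) - y i) - ((⇑F)^[k i] (y i) - y i)
          = (⇑F)^[n * q i - k i] ((⇑F)^[k i] (y i)) - (⇑F)^[k i] (y i) := by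
        rw [← Function.iterate_add_apply, hj']
        abel
      rw [heq]
      calc ‖(⇑F)^[n * q i - k i] ((⇑F)^[k i] (y i)) - (⇑F)^[k i] (y i)‖
          ≤ (n * q i - k i : ℕ) * C_F := iter_disp_bound F hCF _ _
        _ ≤ n * C_F := by
            apply mul_le_mul_of_nonneg_right _ hCF0
            have h := hqk i
            exact_mod_cast Nat.cast_le.mpr (by omega : n * q i - k i ≤ n)
    have hdec : ∀ i, (((n * q i : ℕ)) : ℝ)⁻¹ • ((⇑F)^[n * q i] (y i) - y i)
        = ((k i : ℝ) * (((n * q i : ℕ)) : ℝ)⁻¹) • (((k i : ℕ) : ℝ)⁻¹ • ((⇑F)^[k i] (y i) - y i))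
          + (((n * q i : ℕ)) : ℝ)⁻¹ • (((⇑F)^[n * q i] (y i) - y i) - ((⇑F)^[k i] (y i) - y i)) := by
      intro i
      rw [smul_smul]
      have hs : (k i : ℝ) * (((n * q i : ℕ)) : ℝ)⁻¹ * ((k i : ℕ) : ℝ)⁻¹
          = (((n * q i : ℕ)) : ℝ)⁻¹ := by
        rw [mul_comm ((k i : ℝ)) _, mul_assoc, mul_inv_cancel₀ (hkne i), mul_one]
      rw [hs, ← smul_add]
      congr 1
      abel
    have hα : Tendsto (fun i => (k i : ℝ) * (((n * q i : ℕ)) : ℝ)⁻¹) atTop (nhds 1) := by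
      have h0 : Tendsto (fun i => ((q i : ℕ) : ℝ)⁻¹) atTop (nhds 0) :=
        tendsto_inv_atTop_zero.comp ((tendsto_natCast_atTop_atTop (R := ℝ)).comp htopq)
      have hlow : Tendsto (fun i => 1 - ((q i : ℕ) : ℝ)⁻¹) atTop (nhds 1) := by
        have := h0.const_sub 1
        simpa using this
      refine tendsto_of_tendsto_of_tendsto_of_le_of_le hlow tendsto_const_nhds ?_ ?_
      · intro i
        show 1 - ((q i : ℕ) : ℝ)⁻¹ ≤ (k i : ℝ) * (((n * q i : ℕ)) : ℝ)⁻¹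
        have hcast : ((n * q i : ℕ) : ℝ) = (n : ℝ) * ((q i : ℕ) : ℝ) := by push_cast; ring
        have hge : ((n * q i : ℕ) : ℝ) - (n : ℝ) ≤ (k i : ℝ) := by
          have h := hqk i
          have h' : ((n * q i : ℕ) : ℝ) ≤ (k i : ℝ) + (n : ℝ) := by exact_mod_cast h
          linarith
        rw [← div_eq_mul_inv, le_div_iff₀ (hnqpos i)]
        have hexp : (1 - ((q i : ℕ) : ℝ)⁻¹) * ((n * q i : ℕ) : ℝ)
            = ((n * q i : ℕ) : ℝ) - (n : ℝ) := by
          have hqq : ((q i : ℕ) : ℝ)⁻¹ * ((n : ℝ) * ((q i : ℕ) : ℝ)) = (n : ℝ) := by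
            rw [mul_comm ((n : ℝ)) _, ← mul_assoc, inv_mul_cancel₀ (hqne i), one_mul]
          rw [hcast, sub_mul, one_mul, hqq]
        rw [hexp]
        exact hge
      · intro i
        show (k i : ℝ) * (((n * q i : ℕ)) : ℝ)⁻¹ ≤ 1
        rw [← div_eq_mul_inv]
        apply div_le_one_of_le₀ _ (hnqpos i).le
        exact_mod_cast (hkq i).le
    have herr : Tendsto (fun i => (((n * q i : ℕ)) : ℝ)⁻¹ •
        (((⇑F)^[n * q i] (y i) - y i) - ((⇑F)^[k i] (y i) - y i))) atTop (nhds 0) := by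
      have hb : Tendsto (fun i => (((n * q i : ℕ)) : ℝ)⁻¹ * (n * C_F)) atTop (nhds 0) := by
        have hnq : Tendsto (fun i => n * q i) atTop atTop :=
          tendsto_atTop_mono (fun i => Nat.le_mul_of_pos_left (q i) hnpos) htopq
        have := (tendsto_inv_atTop_zero.comp ((tendsto_natCast_atTop_atTop (R := ℝ)).comp hnq)).mul_const
          ((n : ℝ) * C_F)
        simpa using this
      refine squeeze_zero_norm (fun i => ?_) hb
      rw [norm_smul, Real.norm_eq_abs, abs_of_nonneg (by positivity)]
      exact mul_le_mul_of_nonneg_left (hdiff i) (by positivity)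
    have := (hα.smul hlim).add herr
    rw [one_smul, add_zero] at this
    exact Tendsto.congr (fun i => (hdec i).symm) this
  -- main computation with H.symm
  refine ⟨fun i => H.symm (y i), q, hq, htopq, ?_⟩
  have hkey : ∀ i, (⇑F)^[q i] (H.symm (y i))
      = H.symm ((⇑F)^[n * q i] (y i) + (q i : ℝ) • cR) := by
    intro i
    have h := hconjIter (q i) (H.symm (y i))
    rw [Homeomorph.apply_symm_apply] at h
    have h2 := congrArg H.symm h
    rw [Homeomorph.symm_apply_apply] at h2
    rw [h2]
    congr 1
    rw [← hivec (q i)]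
  have hdec2 : ∀ i, ((q i : ℕ) : ℝ)⁻¹ • ((⇑F)^[q i] (H.symm (y i)) - H.symm (y i))
      = matAct B ((n : ℝ) • ((((n * q i : ℕ)) : ℝ)⁻¹ • ((⇑F)^[n * q i] (y i) - y i)) + cR)
        + ((q i : ℕ) : ℝ)⁻¹ •
          ((H.symm ((⇑F)^[n * q i] (y i) + (q i : ℝ) • cR)
              - matAct B ((⇑F)^[n * q i] (y i) + (q i : ℝ) • cR))
            - (H.symm (y i) - matAct B (y i))) := by
    intro i
    rw [hkey i]
    have hsplit : H.symm ((⇑F)^[n * q i] (y i) + (q i : ℝ) • cR) - H.symm (y i)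
        = matAct B (((⇑F)^[n * q i] (y i) + (q i : ℝ) • cR) - y i)
          + ((H.symm ((⇑F)^[n * q i] (y i) + (q i : ℝ) • cR)
              - matAct B ((⇑F)^[n * q i] (y i) + (q i : ℝ) • cR))
            - (H.symm (y i) - matAct B (y i))) := by
      rw [matAct_sub]
      abel
    rw [hsplit, smul_add]
    congr 1
    rw [← matAct_smul]
    congr 1
    have hWy : ((⇑F)^[n * q i] (y i) + (q i : ℝ) • cR) - y i
        = ((⇑F)^[n * q i] (y i) - y i) + (q i : ℝ) • cR := by abel
    rw [hWy, smul_add, smul_smul, smul_smul]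
    congr 1
    · congr 1
      have hcast : ((n * q i : ℕ) : ℝ) = (n : ℝ) * ((q i : ℕ) : ℝ) := by push_cast; ring
      have : ((q i : ℕ) : ℝ)⁻¹ = (n : ℝ) * (((n * q i : ℕ)) : ℝ)⁻¹ := by
        rw [hcast, mul_inv, ← mul_assoc, mul_inv_cancel₀ hn0R, one_mul]
      rw [this]
    · rw [inv_mul_cancel₀ (hqne i), one_smul]
  have tmain : Tendsto (fun i =>
      matAct B ((n : ℝ) • ((((n * q i : ℕ)) : ℝ)⁻¹ • ((⇑F)^[n * q i] (y i) - y i)) + cR))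
      atTop (nhds (matAct B ((n : ℝ) • v + cR))) := by
    exact ((matAct_cont B).tendsto _).comp ((hlim2.const_smul _).add_const cR)
  have terr : Tendsto (fun i => ((q i : ℕ) : ℝ)⁻¹ •
      ((H.symm ((⇑F)^[n * q i] (y i) + (q i : ℝ) • cR)
          - matAct B ((⇑F)^[n * q i] (y i) + (q i : ℝ) • cR))
        - (H.symm (y i) - matAct B (y i)))) atTop (nhds 0) := by
    have hb : Tendsto (fun i => ((q i : ℕ) : ℝ)⁻¹ * (2 * C_S)) atTop (nhds 0) := by
      have := (tendsto_inv_atTop_zero.comp ((tendsto_natCast_atTop_atTop (R := ℝ)).comp htopq)).mul_const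
        (2 * C_S)
      simpa using this
    refine squeeze_zero_norm (fun i => ?_) hb
    rw [norm_smul, Real.norm_eq_abs, abs_of_nonneg (by positivity)]
    refine mul_le_mul_of_nonneg_left ?_ (by positivity)
    calc ‖_ - _‖ ≤ ‖H.symm ((⇑F)^[n * q i] (y i) + (q i : ℝ) • cR)
          - matAct B ((⇑F)^[n * q i] (y i) + (q i : ℝ) • cR)‖
          + ‖H.symm (y i) - matAct B (y i)‖ := norm_sub_le _ _
      _ ≤ C_S + C_S := add_le_add (hCS _) (hCS _)
      _ = 2 * C_S := by ring
  have total := tmain.add terr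
  rw [add_zero] at total
  exact Tendsto.congr (fun i => (hdec2 i).symm) total

lemma rotSet_nonempty (F : (ℝ × ℝ) ≃ₜ (ℝ × ℝ)) {C_F : ℝ} (hCF0 : 0 ≤ C_F)
    (hCF : ∀ x : ℝ × ℝ, ‖F x - x‖ ≤ C_F) : (rotSet ⇑F).Nonempty := by
  have hub : ∀ i : ℕ, (((i + 1 : ℕ) : ℝ))⁻¹ • ((⇑F)^[i + 1] 0 - 0)
      ∈ Metric.closedBall (0 : ℝ × ℝ) C_F := by
    intro i
    rw [Metric.mem_closedBall, dist_zero_right, norm_smul, Real.norm_eq_abs,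
      abs_of_nonneg (by positivity)]
    have h1 : ‖(⇑F)^[i + 1] (0 : ℝ × ℝ) - 0‖ ≤ (i + 1 : ℕ) * C_F := iter_disp_bound F hCF _ _
    have h2 : (0:ℝ) < ((i + 1 : ℕ) : ℝ) := by positivity
    calc (((i + 1 : ℕ) : ℝ))⁻¹ * ‖(⇑F)^[i + 1] (0 : ℝ × ℝ) - 0‖
        ≤ (((i + 1 : ℕ) : ℝ))⁻¹ * ((i + 1 : ℕ) * C_F) :=
          mul_le_mul_of_nonneg_left h1 (by positivity)
      _ = C_F := by field_simp
  obtain ⟨a, -, φ, hφ, hconv⟩ := tendsto_subseq_of_bounded Metric.isBounded_closedBall hub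
  refine ⟨a, fun _ => 0, fun i => φ i + 1, fun i => Nat.succ_pos _, ?_, ?_⟩
  · exact tendsto_atTop_mono (fun i => le_trans hφ.le_apply (Nat.le_succ _)) tendsto_id
  · exact hconv

lemma rotSet_bounded (F : (ℝ × ℝ) ≃ₜ (ℝ × ℝ)) {C_F : ℝ}
    (hCF : ∀ x : ℝ × ℝ, ‖F x - x‖ ≤ C_F) {v : ℝ × ℝ} (hv : v ∈ rotSet ⇑F) : ‖v‖ ≤ C_F := by
  obtain ⟨x, m, hm, htop, hlim⟩ := hv
  refine le_of_tendsto hlim.norm (Eventually.of_forall fun i => ?_)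
  have hpos : (0:ℝ) < ((m i : ℕ) : ℝ) := by exact_mod_cast hm i
  rw [norm_smul, Real.norm_eq_abs, abs_of_nonneg (by positivity)]
  calc (((m i : ℕ) : ℝ))⁻¹ * ‖(⇑F)^[m i] (x i) - x i‖
      ≤ (((m i : ℕ) : ℝ))⁻¹ * ((m i : ℕ) * C_F) :=
        mul_le_mul_of_nonneg_left (iter_disp_bound F hCF _ _) (by positivity)
    _ = C_F := by field_simp

set_option maxHeartbeats 1000000 in
/-- if `F`, `H` are lifts of torus homeomorphisms `f`, `h` with
`h ∘ f ∘ h⁻¹ = fⁿ`, i.e. `H ∘ F ∘ H⁻¹ = Fⁿ + P₀` for some integer vector `P₀`, then the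
rotation set of `F` is a single point with rational coordinates. -/
theorem rotation_set_is_rational_point
    (n : ℕ) (hn : 2 ≤ n)
    (F H : (ℝ × ℝ) ≃ₜ (ℝ × ℝ)) (A : Matrix (Fin 2) (Fin 2) ℤ)
    (hA : A.det = 1 ∨ A.det = -1)
    (hF : ∀ (x : ℝ × ℝ) (p q : ℤ),
      F (x + ((p : ℝ), (q : ℝ))) = F x + ((p : ℝ), (q : ℝ)))
    (hH : ∀ (x : ℝ × ℝ) (p q : ℤ),
      H (x + ((p : ℝ), (q : ℝ))) = H x + matAct A ((p : ℝ), (q : ℝ)))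
    (P₀ : ℤ × ℤ)
    (hconj : ∀ x : ℝ × ℝ,
      H (F (H.symm x)) = (⇑F)^[n] x + ((P₀.1 : ℝ), (P₀.2 : ℝ))) :
    ∃ v : ℚ × ℚ, rotSet ⇑F = {((v.1 : ℝ), (v.2 : ℝ))} := by
  have hnpos : 0 < n := by omega
  have hn0R : (n : ℝ) ≠ 0 := Nat.cast_ne_zero.mpr hnpos.ne'
  set cR : ℝ × ℝ := ((P₀.1 : ℝ), (P₀.2 : ℝ)) with hcR
  -- determinant facts
  have hdet2 : A.det = A 0 0 * A 1 1 - A 0 1 * A 1 0 := Matrix.det_fin_two A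
  have keyZ : (A 0 0 * A 1 1 - A 0 1 * A 1 0) * A.det = 1 := by
    rw [← hdet2]
    rcases hA with h | h <;> rw [h] <;> ring
  have keyR : ((A 0 0 : ℝ) * (A 1 1 : ℝ) - (A 0 1 : ℝ) * (A 1 0 : ℝ)) * ((A.det : ℤ) : ℝ) = 1 := by
    exact_mod_cast keyZ
  -- the integer inverse matrix B
  set B : Matrix (Fin 2) (Fin 2) ℤ :=
    !![A.det * A 1 1, -(A.det * A 0 1); -(A.det * A 1 0), A.det * A 0 0] with hBdef
  have hB00 : B 0 0 = A.det * A 1 1 := rfl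
  have hB01 : B 0 1 = -(A.det * A 0 1) := rfl
  have hB10 : B 1 0 = -(A.det * A 1 0) := rfl
  have hB11 : B 1 1 = A.det * A 0 0 := rfl
  have hABu : ∀ u : ℝ × ℝ, matAct A (matAct B u) = u := by
    intro u
    unfold matAct
    rw [hB00, hB01, hB10, hB11, Prod.ext_iff]
    constructor <;> push_cast at keyR ⊢ <;> [linear_combination u.1 * keyR; linear_combination u.2 * keyR]
  have hBAu : ∀ u : ℝ × ℝ, matAct B (matAct A u) = u := by
    intro u
    unfold matAct
    rw [hB00, hB01, hB10, hB11, Prod.ext_iff]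
    constructor <;> push_cast at keyR ⊢ <;> [linear_combination u.1 * keyR; linear_combination u.2 * keyR]
  have hiB : ∀ p q : ℤ, matAct B ((p : ℝ), (q : ℝ))
      = (((B 0 0 * p + B 0 1 * q : ℤ) : ℝ), ((B 1 0 * p + B 1 1 * q : ℤ) : ℝ)) := by
    intro p q
    unfold matAct
    rw [Prod.ext_iff]
    constructor <;> push_cast <;> ring
  -- H.symm has linear part B
  have hHsymm : ∀ (x : ℝ × ℝ) (p q : ℤ),
      H.symm (x + ((p : ℝ), (q : ℝ))) = H.symm x + matAct B ((p : ℝ), (q : ℝ)) := by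
    intro x p q
    apply H.injective
    rw [Homeomorph.apply_symm_apply, hiB p q,
      hH (H.symm x) (B 0 0 * p + B 0 1 * q) (B 1 0 * p + B 1 1 * q),
      Homeomorph.apply_symm_apply]
    congr 1
    rw [← hiB, hABu]
  -- bounded deviation constants
  obtain ⟨C_F, hCF0, hCF⟩ := periodic_bounded (fun z => F z - z)
    (F.continuous.sub continuous_id) (by
      intro x p q
      rw [hF]
      abel)
  obtain ⟨C_H, hCH0, hCH⟩ := periodic_bounded (fun z => H z - matAct A z)
    (H.continuous.sub (matAct_cont A)) (by
      intro x p q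
      rw [hH, matAct_add]
      abel)
  obtain ⟨C_S, hCS0, hCS⟩ := periodic_bounded (fun z => H.symm z - matAct B z)
    (H.symm.continuous.sub (matAct_cont B)) (by
      intro x p q
      rw [hHsymm, matAct_add]
      abel)
  -- conjugacy
  have hbase : ∀ y : ℝ × ℝ, H (F y) = (⇑F)^[n] (H y) + cR := by
    intro y
    have := hconj (H y)
    rwa [Homeomorph.symm_apply_apply] at this
  have hconjIter := conj_iter n F H P₀ hF hbase
  set S := rotSet ⇑F with hS
  have hNE : S.Nonempty := rotSet_nonempty F hCF0 hCF
  have hBD : ∀ v ∈ S, ‖v‖ ≤ C_F := fun v hv => rotSet_bounded F hCF hv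
  have hΦS : ∀ v ∈ S, ((n : ℝ))⁻¹ • (matAct A v - cR) ∈ S :=
    fun v hv => rot_transfer_a n hn F H A P₀ hconjIter hCH hv
  have hΨS : ∀ v ∈ S, matAct B ((n : ℝ) • v + cR) ∈ S :=
    fun v hv => rot_transfer_b n hn F H B P₀ hCF0 hCF hconjIter hCS hv
  -- rational fixed point
  set D : ℤ := (A 0 0 - n) * (A 1 1 - n) - A 0 1 * A 1 0 with hDdef
  have hD : D ≠ 0 := by
    intro h0
    have hdvd : (n : ℤ) ∣ A.det := ⟨A 0 0 + A 1 1 - n, by rw [hdet2]; linear_combination h0⟩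
    have hdvd1 : (n : ℤ) ∣ 1 := by
      rcases hA with h | h
      · rwa [h] at hdvd
      · rw [h] at hdvd
        exact (dvd_neg).mp hdvd
    have h1 : (n : ℤ) ≤ 1 := Int.le_of_dvd one_pos hdvd1
    have h2 : (2 : ℤ) ≤ (n : ℤ) := by exact_mod_cast hn
    omega
  have hDR : ((D : ℤ) : ℝ) ≠ 0 := Int.cast_ne_zero.mpr hD
  set vq : ℚ × ℚ := ((((A 1 1 - n) * P₀.1 - A 0 1 * P₀.2 : ℤ) : ℚ) / ((D : ℤ) : ℚ),
    (((A 0 0 - n) * P₀.2 - A 1 0 * P₀.1 : ℤ) : ℚ) / ((D : ℤ) : ℚ)) with hvqdef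
  set vr : ℝ × ℝ := ((vq.1 : ℝ), (vq.2 : ℝ)) with hvrdef
  have hvr1 : vr.1 = (((A 1 1 - n) * P₀.1 - A 0 1 * P₀.2 : ℤ) : ℝ) / ((D : ℤ) : ℝ) := by
    rw [hvrdef, hvqdef]
    push_cast
    ring
  have hvr2 : vr.2 = (((A 0 0 - n) * P₀.2 - A 1 0 * P₀.1 : ℤ) : ℝ) / ((D : ℤ) : ℝ) := by
    rw [hvrdef, hvqdef]
    push_cast
    ring
  have hfix : matAct A vr - (n : ℝ) • vr = cR := by
    have hDexp : ((D : ℤ) : ℝ) = ((A 0 0 : ℝ) - n) * ((A 1 1 : ℝ) - n)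
        - (A 0 1 : ℝ) * (A 1 0 : ℝ) := by
      rw [hDdef]; push_cast; ring
    refine Prod.ext ?_ ?_
    · show (A 0 0 : ℝ) * vr.1 + (A 0 1 : ℝ) * vr.2 - (n : ℝ) * vr.1 = (P₀.1 : ℝ)
      rw [hvr1, hvr2]
      field_simp
      rw [hDexp]
      push_cast
      ring
    · show (A 1 0 : ℝ) * vr.1 + (A 1 1 : ℝ) * vr.2 - (n : ℝ) * vr.2 = (P₀.2 : ℝ)
      rw [hvr1, hvr2]
      field_simp
      rw [hDexp]
      push_cast
      ring
  have hfix' : matAct A vr = cR + (n : ℝ) • vr := by rw [← hfix]; abel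
  -- the shifted invariant set K
  set K : Set (ℝ × ℝ) := (fun v => v - vr) '' S with hK
  have hPhiv : ∀ v : ℝ × ℝ, ((n : ℝ))⁻¹ • (matAct A v - cR) - vr
      = (n : ℝ)⁻¹ • matAct A (v - vr) := by
    intro v
    have h2 : (n : ℝ)⁻¹ • matAct A vr = (n : ℝ)⁻¹ • cR + vr := by
      rw [hfix', smul_add, smul_smul, inv_mul_cancel₀ hn0R, one_smul]
    rw [matAct_sub, smul_sub ((n : ℝ)⁻¹) (matAct A v), smul_sub ((n : ℝ)⁻¹) (matAct A v), h2]
    abel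
  have hLrepr : ∀ v : ℝ × ℝ,
      (((A 0 0 : ℝ)/n) * v.1 + ((A 0 1 : ℝ)/n) * v.2,
        ((A 1 0 : ℝ)/n) * v.1 + ((A 1 1 : ℝ)/n) * v.2) = (n : ℝ)⁻¹ • matAct A v := by
    intro v
    unfold matAct
    simp only [Prod.smul_mk, smul_eq_mul, Prod.mk.injEq]
    constructor <;> field_simp <;> ring
  have hKL : (fun v : ℝ × ℝ => (((A 0 0 : ℝ)/n) * v.1 + ((A 0 1 : ℝ)/n) * v.2,
      ((A 1 0 : ℝ)/n) * v.1 + ((A 1 1 : ℝ)/n) * v.2)) '' K = K := by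
    apply Set.Subset.antisymm
    · rintro u ⟨w, ⟨v, hvS, rfl⟩, rfl⟩
      simp only
      rw [hLrepr, ← hPhiv v]
      exact ⟨_, hΦS v hvS, rfl⟩
    · rintro w ⟨v, hvS, rfl⟩
      have hv'S := hΨS v hvS
      have hΦv' : ((n : ℝ))⁻¹ • (matAct A (matAct B ((n : ℝ) • v + cR)) - cR) = v := by
        rw [hABu ((n : ℝ) • v + cR), add_sub_cancel_right, smul_smul,
          inv_mul_cancel₀ hn0R, one_smul]
      refine ⟨matAct B ((n : ℝ) • v + cR) - vr, ⟨_, hv'S, rfl⟩, ?_⟩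
      simp only
      rw [hLrepr, ← hPhiv _, hΦv']
  -- hypotheses of the linear lemma
  have hroots : ∀ μ : ℝ, μ * μ - ((A 0 0 : ℝ)/n + (A 1 1 : ℝ)/n) * μ
      + ((A 0 0 : ℝ)/n * ((A 1 1 : ℝ)/n) - (A 0 1 : ℝ)/n * ((A 1 0 : ℝ)/n)) = 0 → |μ| ≠ 1 := by
    intro μ hμ habs
    rcases (abs_eq (by norm_num : (0:ℝ) ≤ 1)).mp habs with h1 | h1
    · have hZc : ((n : ℝ)) * ((n^2 - n*(A 0 0 + A 1 1) + (A 0 0 * A 1 1 - A 0 1 * A 1 0) : ℤ) : ℝ)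
          = 0 := by
        rw [h1] at hμ
        field_simp at hμ
        push_cast
        linear_combination (n : ℝ) * hμ
      have hZ' : (n^2 - n*(A 0 0 + A 1 1) + (A 0 0 * A 1 1 - A 0 1 * A 1 0) : ℤ) = 0 := by
        rcases mul_eq_zero.mp hZc with h | h
        · exact absurd h hn0R
        · exact_mod_cast h
      have hdvd : (n : ℤ) ∣ A.det := ⟨A 0 0 + A 1 1 - n, by rw [hdet2]; linear_combination hZ'⟩
      rcases hA with h | h
      · rw [h] at hdvd
        have := Int.le_of_dvd one_pos hdvd
        have h2 : (2 : ℤ) ≤ (n : ℤ) := by exact_mod_cast hn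
        omega
      · rw [h] at hdvd
        have := Int.le_of_dvd one_pos ((dvd_neg).mp hdvd)
        have h2 : (2 : ℤ) ≤ (n : ℤ) := by exact_mod_cast hn
        omega
    · have hZc : ((n : ℝ)) * ((n^2 + n*(A 0 0 + A 1 1) + (A 0 0 * A 1 1 - A 0 1 * A 1 0) : ℤ) : ℝ)
          = 0 := by
        rw [h1] at hμ
        field_simp at hμ
        push_cast
        linear_combination (n : ℝ) * hμ
      have hZ' : (n^2 + n*(A 0 0 + A 1 1) + (A 0 0 * A 1 1 - A 0 1 * A 1 0) : ℤ) = 0 := by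
        rcases mul_eq_zero.mp hZc with h | h
        · exact absurd h hn0R
        · exact_mod_cast h
      have hdvd : (n : ℤ) ∣ A.det :=
        ⟨-(A 0 0 + A 1 1) - n, by rw [hdet2]; linear_combination hZ'⟩
      rcases hA with h | h
      · rw [h] at hdvd
        have := Int.le_of_dvd one_pos hdvd
        have h2 : (2 : ℤ) ≤ (n : ℤ) := by exact_mod_cast hn
        omega
      · rw [h] at hdvd
        have := Int.le_of_dvd one_pos ((dvd_neg).mp hdvd)
        have h2 : (2 : ℤ) ≤ (n : ℤ) := by exact_mod_cast hn
        omega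
  have hdetL : |(A 0 0 : ℝ)/n * ((A 1 1 : ℝ)/n) - (A 0 1 : ℝ)/n * ((A 1 0 : ℝ)/n)| < 1 := by
    have hrepr : (A 0 0 : ℝ)/n * ((A 1 1 : ℝ)/n) - (A 0 1 : ℝ)/n * ((A 1 0 : ℝ)/n)
        = ((A.det : ℤ) : ℝ) / (n : ℝ)^2 := by
      rw [hdet2]
      push_cast
      rw [div_mul_div_comm, div_mul_div_comm, show (n:ℝ) * (n:ℝ) = (n:ℝ)^2 from by ring,
        ← sub_div]
    rw [hrepr, abs_div]
    have hdet1 : |((A.det : ℤ) : ℝ)| = 1 := by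
      rcases hA with h | h <;> rw [h] <;> norm_num
    rw [hdet1, abs_of_pos (by positivity : (0:ℝ) < (n:ℝ)^2)]
    rw [div_lt_one (by positivity)]
    have : (2:ℝ) ≤ (n:ℝ) := by exact_mod_cast hn
    nlinarith
  have hKne : K.Nonempty := hNE.image _
  have hKbd : ∀ w ∈ K, ‖w‖ ≤ C_F + ‖vr‖ := by
    rintro w ⟨v, hv, rfl⟩
    calc ‖v - vr‖ ≤ ‖v‖ + ‖vr‖ := norm_sub_le _ _
      _ ≤ C_F + ‖vr‖ := add_le_add (hBD v hv) le_rfl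
  have hKzero : ∀ w ∈ K, w = 0 :=
    invariant_zero ((A 0 0 : ℝ)/n) ((A 0 1 : ℝ)/n) ((A 1 0 : ℝ)/n) ((A 1 1 : ℝ)/n)
      hroots hdetL hKne (by positivity) hKbd hKL
  refine ⟨vq, ?_⟩
  ext w
  simp only [Set.mem_singleton_iff]
  constructor
  · intro hw
    have h := hKzero (w - vr) ⟨w, hw, rfl⟩
    have : w = vr := by rwa [sub_eq_zero] at h
    rw [this, hvrdef]
  · intro hw
    obtain ⟨v₀, hv₀⟩ := hNE
    have h := hKzero (v₀ - vr) ⟨v₀, hv₀, rfl⟩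
    have hv0 : v₀ = vr := by rwa [sub_eq_zero] at h
    rw [hw, ← hvrdef, ← hv0]
    exact hv₀
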